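/- arXiv:2110.12549 — 3 statements merged into one kernel-verified Lean document; each statement's English description precedes it below -/
import Mathlib

section
/- There exists a constant C > 0 such that for every real t ≥ 2, the Gauss measure of the set {x ∈ (0,1) : a_1(x)·a_2(x) ≥ t} differs from (log t)/(t·log 2) by at most C/t; that is, |μ({x : a_1(x)a_2(x) ≥ t}) − (log t)/(t log 2)| ≤ C/t. -/
open MeasureTheory Filter Real Set

/-- The Gauss map `T(x) = 1/x - ⌊1/x⌋`, with `T(0) = 0`. -/
noncomputable def gaussMap (x : ℝ) : ℝ := if x = 0 then 0 else 1 / x - ⌊1 / x⌋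

/-- The `n`-th partial quotient `a_n(x) = ⌊1 / T^{n-1}(x)⌋` (for `n ≥ 1`). -/
noncomputable def pq (n : ℕ) (x : ℝ) : ℕ := ⌊1 / (gaussMap^[n - 1] x)⌋₊

/-- `S_n(x) = ∑_{i=1}^n a_i(x) a_{i+1}(x)`. -/
noncomputable def S (n : ℕ) (x : ℝ) : ℕ := ∑ i ∈ Finset.Icc 1 n, pq i x * pq (i + 1) x

/-- The Gauss measure `μ(A) = (1/log 2) ∫_A dx/(1+x)` on `(0,1)`. -/
noncomputable def gaussMeasure : Measure ℝ :=
  (volume.restrict (Set.Ioo (0:ℝ) 1)).withDensity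
    (fun x => ENNReal.ofReal (1 / (Real.log 2 * (1 + x))))

noncomputable def gc (t : ℝ) (k : ℕ) : ℝ :=
  (⌈t / (k+1)⌉₊ : ℝ) / (((k:ℝ)+1) * ⌈t / (k+1)⌉₊ + 1)

noncomputable def gJ (t : ℝ) (k : ℕ) : Set ℝ :=
  Set.Ioo (1/((k:ℝ)+2) : ℝ) (1/((k:ℝ)+1)) ∩ Set.Ici (gc t k)

noncomputable def gG (t : ℝ) (k : ℕ) : ℝ :=
  Real.log (1+1/((k:ℝ)+1)) - Real.log (1+gc t k)


-- helper log bounds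

lemma log_diff_le {x y : ℝ} (hx : 0 < x) (hxy : x ≤ y) :
    Real.log y - Real.log x ≤ (y - x) / x := by
  have hy : 0 < y := lt_of_lt_of_le hx hxy
  have := Real.log_le_sub_one_of_pos (show (0:ℝ) < y/x by positivity)
  rw [Real.log_div (ne_of_gt hy) (ne_of_gt hx)] at this
  have : Real.log y - Real.log x ≤ y/x - 1 := this
  linarith [show y/x - 1 = (y-x)/x by field_simp]

lemma le_log_diff {x y : ℝ} (hx : 0 < x) (hxy : x ≤ y) :
    (y - x) / y ≤ Real.log y - Real.log x := by
  have hy : 0 < y := lt_of_lt_of_le hx hxy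
  have := Real.log_le_sub_one_of_pos (show (0:ℝ) < x/y by positivity)
  rw [Real.log_div (ne_of_gt hx) (ne_of_gt hy)] at this
  have h2 : x/y - 1 = -((y-x)/y) := by field_simp; ring
  linarith [this, h2 ▸ this]



lemma gauss_Ioo {a b : ℝ} (ha : 0 ≤ a) (hab : a ≤ b) (hb : b ≤ 1) :
    gaussMeasure (Set.Ioo a b)
      = ENNReal.ofReal ((Real.log (1+b) - Real.log (1+a)) / Real.log 2) := by
  have hlog2 : (0:ℝ) < Real.log 2 := Real.log_pos one_lt_two
  rw [gaussMeasure, withDensity_apply _ measurableSet_Ioo,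
    Measure.restrict_restrict measurableSet_Ioo]
  have hinter : Set.Ioo a b ∩ Set.Ioo (0:ℝ) 1 = Set.Ioo a b := by
    rw [Set.Ioo_inter_Ioo]
    rw [sup_eq_left.mpr ha, inf_eq_left.mpr hb]
  rw [hinter]
  have hcont : ContinuousOn (fun x : ℝ => 1 / (Real.log 2 * (1 + x))) (Set.Icc a b) := by
    apply ContinuousOn.div continuousOn_const
    · fun_prop
    · intro x hx
      have : 0 < 1 + x := by nlinarith [hx.1]
      positivity
  have hint : IntegrableOn (fun x : ℝ => 1 / (Real.log 2 * (1 + x))) (Set.Ioo a b) :=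
    (hcont.integrableOn_Icc).mono_set Set.Ioo_subset_Icc_self
  rw [← MeasureTheory.ofReal_integral_eq_lintegral_ofReal hint]
  · congr 1
    have h1 : ∫ x in Set.Ioo a b, 1 / (Real.log 2 * (1 + x))
        = ∫ x in a..b, 1 / (Real.log 2 * (1 + x)) := by
      rw [intervalIntegral.integral_of_le hab, MeasureTheory.integral_Ioc_eq_integral_Ioo]
    rw [h1]
    have h2 : ∀ x : ℝ, 1 / (Real.log 2 * (1 + x)) = (Real.log 2)⁻¹ * (1+x)⁻¹ := by
      intro x; rw [one_div, mul_inv]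
    simp_rw [h2]
    rw [intervalIntegral.integral_const_mul]
    have h3 : ∫ x in a..b, (1+x)⁻¹ = ∫ x in (1+a)..(1+b), x⁻¹ := by
      simpa using intervalIntegral.integral_comp_add_left (fun x => x⁻¹) 1 (a := a) (b := b)
    rw [h3, integral_inv (by
      intro h
      rcases h with h
      simp [Set.uIcc_of_le (by linarith : (1:ℝ)+a ≤ 1+b)] at h
      linarith [h.1])]
    rw [Real.log_div (by linarith) (by linarith)]
    ring
  · filter_upwards [ae_restrict_mem measurableSet_Ioo] with x hx
    have : 0 < 1 + x := by nlinarith [hx.1]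
    positivity



lemma pq_one (x : ℝ) : pq 1 x = ⌊1/x⌋₊ := by simp [pq]

lemma pq_two (x : ℝ) : pq 2 x = ⌊1/gaussMap x⌋₊ := by simp [pq]

lemma gE_eq (t : ℝ) (ht : 2 ≤ t) :
    {x : ℝ | x ∈ Set.Ioo (0:ℝ) 1 ∧ t ≤ ((pq 1 x * pq 2 x : ℕ) : ℝ)} = ⋃ k, gJ t k := by
  have ht0 : (0:ℝ) < t := by linarith
  ext x
  simp only [Set.mem_setOf_eq, Set.mem_iUnion, gJ, gc, Set.mem_inter_iff, Set.mem_Ioo,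
    Set.mem_Ici]
  constructor
  · rintro ⟨⟨hx0, hx1⟩, hle⟩
    have hxinv : 1 < 1/x := by rw [lt_div_iff₀ hx0]; linarith
    have hKM0 : pq 1 x * pq 2 x ≠ 0 := by
      intro h
      rw [h] at hle
      norm_num at hle
      linarith
    have hK0 : pq 1 x ≠ 0 := by intro h; exact hKM0 (by simp [h])
    have hM0' : pq 2 x ≠ 0 := by intro h; exact hKM0 (by simp [h])
    obtain ⟨k, hk⟩ : ∃ k, pq 1 x = k + 1 := ⟨pq 1 x - 1, by omega⟩
    have hM1 : 1 ≤ pq 2 x := by omega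
    set M := pq 2 x with hM
    have hKfl : ((k:ℝ)+1) ≤ 1/x := by
      have := Nat.floor_le (show (0:ℝ) ≤ 1/x by positivity)
      rw [← pq_one, hk] at this
      push_cast at this
      linarith
    have hKfl' : 1/x < (k:ℝ) + 2 := by
      have := Nat.lt_floor_add_one (1/x)
      rw [← pq_one, hk] at this
      push_cast at this
      linarith
    have hne : ((k:ℝ)+1) ≠ 1/x := by
      intro h
      have hg : gaussMap x = 0 := by
        rw [gaussMap, if_neg (ne_of_gt hx0), ← h]
        rw [show ((k:ℝ)+1) = ((k+1:ℤ):ℝ) by push_cast; ring, Int.floor_intCast]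
        push_cast
        ring
      have : M = 0 := by rw [hM, pq_two, hg]; simp
      omega
    have hKlt : ((k:ℝ)+1) < 1/x := lt_of_le_of_ne hKfl hne
    have hgx : gaussMap x = 1/x - ((k:ℝ)+1) := by
      rw [gaussMap, if_neg (ne_of_gt hx0)]
      have : ⌊1/x⌋ = (k+1 : ℤ) := by
        rw [Int.floor_eq_iff]
        constructor <;> push_cast <;> linarith
      rw [this]
      push_cast
      ring
    have hgx0 : 0 < gaussMap x := by rw [hgx]; linarith
    have hgx1 : gaussMap x < 1 := by rw [hgx]; linarith
    refine ⟨k, ⟨?_, ?_⟩, ?_⟩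
    · rw [div_lt_iff₀ (by positivity)]
      rw [div_lt_iff₀ hx0] at hKfl'
      linarith
    · rw [lt_div_iff₀ (by positivity : (0:ℝ) < (k:ℝ)+1)]
      rw [lt_div_iff₀ hx0] at hKlt
      nlinarith
    · set m := ⌈t / ((k:ℝ)+1)⌉₊ with hm
      have hmM : m ≤ M := by
        rw [hm]
        apply Nat.ceil_le.mpr
        rw [div_le_iff₀ (by positivity : (0:ℝ) < (k:ℝ)+1)]
        push_cast [hk] at hle
        nlinarith
      have hm1 : 1 ≤ m := Nat.one_le_ceil_iff.mpr (by positivity)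
      have hm0 : (0:ℝ) < m := by exact_mod_cast hm1
      have hM0 : (0:ℝ) < M := by exact_mod_cast hM1
      have hMfl : (M:ℝ) ≤ 1/gaussMap x := by
        rw [hM, pq_two]
        exact Nat.floor_le (by positivity)
      have h1 : gaussMap x ≤ 1/(m:ℝ) := by
        rw [le_div_iff₀ hm0]
        rw [le_div_iff₀ hgx0] at hMfl
        have : (m:ℝ) ≤ M := by exact_mod_cast hmM
        nlinarith
      have h2 : 1/x ≤ ((k:ℝ)+1) + 1/m := by rw [hgx] at h1; linarith
      rw [div_le_iff₀ (by positivity)]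
      rw [div_le_iff₀ hx0] at h2
      have hmm : (m:ℝ) * (1/(m:ℝ)) = 1 := by field_simp
      nlinarith [mul_le_mul_of_nonneg_left h2 (le_of_lt hm0)]
  · rintro ⟨k, ⟨hxa, hxb⟩, hxc⟩
    have hx0 : 0 < x := lt_trans (by positivity) hxa
    have hx1 : x < 1 := lt_of_lt_of_le hxb (by
      rw [div_le_one (by positivity)]; linarith [Nat.cast_nonneg (α := ℝ) k])
    set m := ⌈t / ((k:ℝ)+1)⌉₊ with hm
    have hm1 : 1 ≤ m := Nat.one_le_ceil_iff.mpr (by positivity)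
    have hm0 : (0:ℝ) < m := by exact_mod_cast hm1
    -- 1/x ∈ (k+1, k+2)
    have hKlt : ((k:ℝ)+1) < 1/x := by
      rw [lt_div_iff₀ hx0]
      rw [lt_div_iff₀ (by positivity : (0:ℝ) < (k:ℝ)+1)] at hxb
      linarith
    have hKlt' : 1/x < (k:ℝ)+2 := by
      rw [div_lt_iff₀ hx0]
      rw [div_lt_iff₀ (by positivity : (0:ℝ) < (k:ℝ)+2)] at hxa
      linarith
    have hpq1 : pq 1 x = k + 1 := by
      rw [pq_one]
      rw [Nat.floor_eq_iff (by positivity)]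
      constructor <;> push_cast <;> linarith
    have hgx : gaussMap x = 1/x - ((k:ℝ)+1) := by
      rw [gaussMap, if_neg (ne_of_gt hx0)]
      have : ⌊1/x⌋ = (k+1 : ℤ) := by
        rw [Int.floor_eq_iff]
        constructor <;> push_cast <;> linarith
      rw [this]
      push_cast
      ring
    have hgx0 : 0 < gaussMap x := by rw [hgx]; linarith
    -- from x ≥ c : 1/x ≤ k+1 + 1/m, so gaussMap x ≤ 1/m, so m ≤ 1/gaussMap x
    have h2 : 1/x ≤ ((k:ℝ)+1) + 1/m := by
      have h := one_div_le_one_div_of_le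
        (by positivity : (0:ℝ) < (m:ℝ)/(((k:ℝ)+1)*m+1)) hxc
      rw [one_div_div] at h
      calc 1/x ≤ (((k:ℝ)+1)*(m:ℝ)+1)/(m:ℝ) := h
        _ = ((k:ℝ)+1) + 1/m := by field_simp
    have h3 : (m:ℝ) ≤ 1/gaussMap x := by
      rw [le_div_iff₀ hgx0, hgx]
      have : gaussMap x ≤ 1/m := by rw [hgx]; linarith
      rw [hgx] at this
      calc (m:ℝ) * (1/x - ((k:ℝ)+1)) ≤ (m:ℝ) * (1/m) := by
            apply mul_le_mul_of_nonneg_left this (le_of_lt hm0)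
        _ = 1 := by field_simp
    have hpq2 : m ≤ pq 2 x := by
      rw [pq_two]
      exact Nat.le_floor h3
    refine ⟨⟨hx0, hx1⟩, ?_⟩
    have hmt : t / ((k:ℝ)+1) ≤ m := Nat.le_ceil _
    rw [div_le_iff₀ (by positivity : (0:ℝ) < (k:ℝ)+1)] at hmt
    rw [hpq1]
    push_cast
    have : (m:ℝ) ≤ pq 2 x := by exact_mod_cast hpq2
    nlinarith [Nat.cast_nonneg (α := ℝ) k]



lemma gc_pos (t : ℝ) (ht : 0 < t) (k : ℕ) : 0 < gc t k := by
  have hm1 : 1 ≤ ⌈t / ((k:ℝ)+1)⌉₊ := Nat.one_le_ceil_iff.mpr (by positivity)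
  have hm0 : (0:ℝ) < ⌈t / ((k:ℝ)+1)⌉₊ := by exact_mod_cast hm1
  rw [gc]
  positivity

lemma gc_lb (t : ℝ) (ht : 0 < t) (k : ℕ) : 1/((k:ℝ)+2) ≤ gc t k := by
  have hm1 : 1 ≤ ⌈t / ((k:ℝ)+1)⌉₊ := Nat.one_le_ceil_iff.mpr (by positivity)
  have hm0 : (0:ℝ) < ⌈t / ((k:ℝ)+1)⌉₊ := by exact_mod_cast hm1
  have hm1r : (1:ℝ) ≤ ⌈t / ((k:ℝ)+1)⌉₊ := by exact_mod_cast hm1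
  rw [gc, div_le_div_iff₀ (by positivity) (by positivity)]
  nlinarith [Nat.cast_nonneg (α := ℝ) k]

lemma gc_ub (t : ℝ) (ht : 0 < t) (k : ℕ) : gc t k < 1/((k:ℝ)+1) := by
  have hm1 : 1 ≤ ⌈t / ((k:ℝ)+1)⌉₊ := Nat.one_le_ceil_iff.mpr (by positivity)
  have hm0 : (0:ℝ) < ⌈t / ((k:ℝ)+1)⌉₊ := by exact_mod_cast hm1
  rw [gc, div_lt_div_iff₀ (by positivity) (by positivity)]
  nlinarith

lemma gauss_singleton (c : ℝ) : gaussMeasure {c} = 0 := by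
  apply MeasureTheory.withDensity_absolutelyContinuous _ _
  exact le_antisymm (le_trans (Measure.restrict_apply_le _ _) (by simp)) zero_le

lemma gauss_gJ (t : ℝ) (ht : 2 ≤ t) (k : ℕ) :
    gaussMeasure (gJ t k)
      = ENNReal.ofReal ((Real.log (1+1/((k:ℝ)+1)) - Real.log (1+gc t k)) / Real.log 2) := by
  have ht0 : (0:ℝ) < t := by linarith
  have h1 : Set.Ioo (gc t k) (1/((k:ℝ)+1)) ⊆ gJ t k := by
    intro x hx
    exact ⟨⟨lt_of_le_of_lt (gc_lb t ht0 k) hx.1, hx.2⟩, le_of_lt hx.1⟩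
  have h2 : gJ t k ⊆ Set.Ico (gc t k) (1/((k:ℝ)+1)) := by
    rintro x ⟨⟨_, hb⟩, hc⟩
    exact ⟨hc, hb⟩
  have hIoo : gaussMeasure (Set.Ioo (gc t k) (1/((k:ℝ)+1)))
      = ENNReal.ofReal ((Real.log (1+1/((k:ℝ)+1)) - Real.log (1+gc t k)) / Real.log 2) :=
    gauss_Ioo (le_of_lt (gc_pos t ht0 k)) (le_of_lt (gc_ub t ht0 k))
      (by rw [div_le_one (by positivity)]; linarith [Nat.cast_nonneg (α := ℝ) k])
  have hIco : gaussMeasure (Set.Ico (gc t k) (1/((k:ℝ)+1)))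
      ≤ gaussMeasure (Set.Ioo (gc t k) (1/((k:ℝ)+1))) := by
    calc gaussMeasure (Set.Ico (gc t k) (1/((k:ℝ)+1)))
        ≤ gaussMeasure ({gc t k} ∪ Set.Ioo (gc t k) (1/((k:ℝ)+1))) := by
          apply measure_mono
          intro x hx
          rcases eq_or_lt_of_le hx.1 with h | h
          · exact Or.inl (by simp [← h])
          · exact Or.inr ⟨h, hx.2⟩
      _ ≤ gaussMeasure {gc t k} + gaussMeasure (Set.Ioo (gc t k) (1/((k:ℝ)+1))) :=
          measure_union_le _ _
      _ = gaussMeasure (Set.Ioo (gc t k) (1/((k:ℝ)+1))) := by rw [gauss_singleton]; ring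
  refine le_antisymm ?_ ?_
  · rw [← hIoo]; exact le_trans (measure_mono h2) hIco
  · rw [← hIoo]; exact measure_mono h1

lemma gJ_disjoint (t : ℝ) : Pairwise (Function.onFun Disjoint (gJ t)) := by
  have key : ∀ i j : ℕ, i < j → Disjoint (gJ t i) (gJ t j) := by
    intro i j hij
    rw [Set.disjoint_left]
    rintro x ⟨⟨hxa, _⟩, _⟩ ⟨⟨_, hxb⟩, _⟩
    have h1 : 1/((j:ℝ)+1) ≤ 1/((i:ℝ)+2) := by
      apply one_div_le_one_div_of_le (by positivity)
      have : (i:ℝ) + 1 ≤ j := by exact_mod_cast hij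
      linarith
    linarith
  intro i j hij
  rcases lt_or_gt_of_ne hij with h | h
  · exact key i j h
  · exact (key j i h).symm

lemma gJ_measurable (t : ℝ) (k : ℕ) : MeasurableSet (gJ t k) :=
  measurableSet_Ioo.inter measurableSet_Ici



lemma gG_nonneg (t : ℝ) (ht : 0 < t) (k : ℕ) : 0 ≤ gG t k := by
  rw [gG, sub_nonneg]
  apply Real.log_le_log (by linarith [gc_pos t ht k])
  linarith [gc_ub t ht k]

lemma gG_le_diff (t : ℝ) (ht : 0 < t) (k : ℕ) :
    gG t k ≤ 1/((k:ℝ)+1) - 1/((k:ℝ)+2) := by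
  have h1 : (0:ℝ) < 1 + gc t k := by linarith [gc_pos t ht k]
  have h2 : 1 + gc t k ≤ 1 + 1/((k:ℝ)+1) := by linarith [gc_ub t ht k]
  calc gG t k ≤ ((1 + 1/((k:ℝ)+1)) - (1 + gc t k)) / (1 + gc t k) := log_diff_le h1 h2
    _ ≤ ((1 + 1/((k:ℝ)+1)) - (1 + gc t k)) / 1 := by
        apply div_le_div_of_nonneg_left _ one_pos _ <;> linarith [gc_pos t ht k, gc_ub t ht k]
    _ ≤ 1/((k:ℝ)+1) - 1/((k:ℝ)+2) := by
        rw [div_one]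
        linarith [gc_lb t ht k]

lemma aux_summable : Summable (fun k : ℕ => 1/((k:ℝ)+1) - 1/((k:ℝ)+2)) := by
  have h2 : Summable (fun k : ℕ => 1/((k:ℝ)+1)^2) := by
    have := (summable_nat_add_iff (f := fun n : ℕ => 1 / (n:ℝ) ^ 2) 1).mpr
      ((Real.summable_one_div_nat_pow (p := 2)).mpr one_lt_two)
    apply this.congr
    intro k
    push_cast
    ring
  apply Summable.of_nonneg_of_le _ _ h2
  · intro k
    rw [sub_nonneg]
    apply one_div_le_one_div_of_le (by positivity)
    linarith
  · intro k
    rw [div_sub_div _ _ (by positivity) (by positivity)]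
    rw [div_le_div_iff₀ (by positivity) (by positivity)]
    nlinarith [Nat.cast_nonneg (α := ℝ) k]

lemma gG_summable (t : ℝ) (ht : 0 < t) : Summable (gG t) :=
  Summable.of_nonneg_of_le (fun k => gG_nonneg t ht k) (fun k => gG_le_diff t ht k)
    aux_summable

lemma gG_le (t : ℝ) (ht : 2 ≤ t) (k : ℕ) : gG t k ≤ 1/((((k:ℝ))+2)*t) := by
  have ht0 : (0:ℝ) < t := by linarith
  set K : ℝ := (k:ℝ) + 1 with hK
  have hK1 : (1:ℝ) ≤ K := by rw [hK]; linarith [Nat.cast_nonneg (α := ℝ) k]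
  have hK0 : (0:ℝ) < K := by linarith
  set m : ℝ := (⌈t / ((k:ℝ)+1)⌉₊ : ℝ) with hm
  have hm1 : (1:ℝ) ≤ m := by
    rw [hm]
    exact_mod_cast Nat.one_le_ceil_iff.mpr (by positivity)
  have hKm : t ≤ K * m := by
    have := Nat.le_ceil (t / ((k:ℝ)+1))
    rw [← hm, div_le_iff₀ (by positivity : (0:ℝ) < (k:ℝ)+1)] at this
    rw [hK]; linarith
  have hQ0 : (0:ℝ) < K*m+1 := by positivity
  have hgc : gc t k = m / (K*m+1) := by rw [gc, hK, hm]
  have h1 : (0:ℝ) < 1 + gc t k := by linarith [gc_pos t ht0 k]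
  have h2 : 1 + gc t k ≤ 1 + 1/K := by rw [hK]; linarith [gc_ub t ht0 k]
  have step := log_diff_le h1 h2
  have hdiff : (1 + 1/K) - (1 + gc t k) = 1/(K*(K*m+1)) := by
    rw [hgc]; field_simp; ring
  rw [hdiff, hgc] at step
  have hform : (1/(K*(K*m+1))) / (1 + m/(K*m+1)) = 1/(K*(K*m+m+1)) := by
    rw [div_eq_div_iff (by positivity) (by positivity)]
    field_simp
    ring
  rw [hform] at step
  have key : (K+1)*t ≤ K*(K*m+m+1) := by nlinarith
  calc gG t k ≤ 1/(K*(K*m+m+1)) := step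
    _ ≤ 1/((K+1)*t) := by
        apply one_div_le_one_div_of_le (by positivity) key
    _ = 1/((((k:ℝ))+2)*t) := by rw [hK]; ring_nf

lemma le_gG (t : ℝ) (ht : 2 ≤ t) (k : ℕ) :
    1/((((k:ℝ))+2)*t) - 1/t^2 ≤ gG t k := by
  have ht0 : (0:ℝ) < t := by linarith
  set K : ℝ := (k:ℝ) + 1 with hK
  have hK1 : (1:ℝ) ≤ K := by rw [hK]; linarith [Nat.cast_nonneg (α := ℝ) k]
  have hK0 : (0:ℝ) < K := by linarith
  set m : ℝ := (⌈t / ((k:ℝ)+1)⌉₊ : ℝ) with hm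
  have hm1 : (1:ℝ) ≤ m := by
    rw [hm]
    exact_mod_cast Nat.one_le_ceil_iff.mpr (by positivity)
  have hKm : t ≤ K * m := by
    have := Nat.le_ceil (t / ((k:ℝ)+1))
    rw [← hm, div_le_iff₀ (by positivity : (0:ℝ) < (k:ℝ)+1)] at this
    rw [hK]; linarith
  have hKm2 : K * m ≤ t + K := by
    have := Nat.ceil_lt_add_one (show (0:ℝ) ≤ t / ((k:ℝ)+1) by positivity)
    rw [← hm] at this
    have h' : m * ((k:ℝ)+1) < (t / ((k:ℝ)+1) + 1) * ((k:ℝ)+1) := by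
      apply mul_lt_mul_of_pos_right this (by positivity)
    rw [add_mul, div_mul_cancel₀ _ (by positivity : ((k:ℝ)+1) ≠ 0)] at h'
    rw [hK]; nlinarith
  have hQ0 : (0:ℝ) < K*m+1 := by positivity
  have hgc : gc t k = m / (K*m+1) := by rw [gc, hK, hm]
  have h1 : (0:ℝ) < 1 + gc t k := by linarith [gc_pos t ht0 k]
  have h2 : 1 + gc t k ≤ 1 + 1/K := by rw [hK]; linarith [gc_ub t ht0 k]
  have step := le_log_diff h1 h2
  have hdiff : (1 + 1/K) - (1 + gc t k) = 1/(K*(K*m+1)) := by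
    rw [hgc]; field_simp; ring
  rw [hdiff] at step
  have hvK : 1 + 1/K = (K+1)/K := by field_simp
  have hQt : t ≤ K*m+1 := by linarith
  have hP0 : (0:ℝ) < K+1 := by linarith
  have hmain : 1/((K+1)*t) - 1/t^2 ≤ 1/((K+1)*(K*m+1)) := by
    have hQP : K*m+1 ≤ t + (K+1) := by linarith
    have h : t*((K*m+1)-t) ≤ (K+1)*(K*m+1) := by
      nlinarith [mul_le_mul_of_nonneg_left (show (K*m+1)-t ≤ K+1 by linarith) (le_of_lt ht0),
        mul_le_mul_of_nonneg_right hQt (le_of_lt hP0)]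
    have hid : 1/((K+1)*t) - 1/((K+1)*(K*m+1)) = ((K*m+1)-t)/((K+1)*t*(K*m+1)) := by
      field_simp
    have h2 : ((K*m+1)-t)/((K+1)*t*(K*m+1)) ≤ 1/t^2 := by
      rw [div_le_div_iff₀ (by positivity) (by positivity)]
      nlinarith [mul_le_mul_of_nonneg_right h (le_of_lt ht0)]
    linarith [hid ▸ h2]
  have hform : (1/(K*(K*m+1))) / ((K+1)/K) = 1/((K+1)*(K*m+1)) := by
    rw [div_eq_div_iff (by positivity) (by positivity)]
    field_simp
  calc 1/((((k:ℝ))+2)*t) - 1/t^2 = 1/((K+1)*t) - 1/t^2 := by rw [hK]; ring_nf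
    _ ≤ 1/((K+1)*(K*m+1)) := hmain
    _ = (1/(K*(K*m+1))) / ((K+1)/K) := hform.symm
    _ ≤ gG t k := by rw [← hvK]; exact step



lemma harm_ub (n : ℕ) : ∑ k ∈ Finset.range n, 1/((k:ℝ)+2) ≤ Real.log ((n:ℝ)+1) := by
  induction n with
  | zero => simp
  | succ n ih =>
      rw [Finset.sum_range_succ]
      have h : 1/((n:ℝ)+2) ≤ Real.log ((n:ℝ)+2) - Real.log ((n:ℝ)+1) := by
        have := le_log_diff (show (0:ℝ) < (n:ℝ)+1 by positivity)
          (show (n:ℝ)+1 ≤ (n:ℝ)+2 by linarith)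
        calc 1/((n:ℝ)+2) = ((n:ℝ)+2 - ((n:ℝ)+1))/((n:ℝ)+2) := by ring_nf
          _ ≤ _ := this
      push_cast
      have e : ((n:ℝ)+1+1) = (n:ℝ)+2 := by ring
      rw [e]
      linarith

lemma harm_lb (n : ℕ) :
    Real.log ((n:ℝ)+2) - Real.log 2 ≤ ∑ k ∈ Finset.range n, 1/((k:ℝ)+2) := by
  induction n with
  | zero => simp
  | succ n ih =>
      rw [Finset.sum_range_succ]
      have h : Real.log ((n:ℝ)+3) - Real.log ((n:ℝ)+2) ≤ 1/((n:ℝ)+2) := by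
        have := log_diff_le (show (0:ℝ) < (n:ℝ)+2 by positivity)
          (show (n:ℝ)+2 ≤ (n:ℝ)+3 by linarith)
        calc Real.log ((n:ℝ)+3) - Real.log ((n:ℝ)+2) ≤ ((n:ℝ)+3 - ((n:ℝ)+2))/((n:ℝ)+2) := this
          _ = 1/((n:ℝ)+2) := by ring_nf
      push_cast
      have e : ((n:ℝ)+1+2) = (n:ℝ)+3 := by ring
      rw [e]
      linarith

lemma tsum_gG_est (t : ℝ) (ht : 2 ≤ t) :
    |(∑' k, gG t k) - Real.log t / t| ≤ 2 / t := by
  have ht0 : (0:ℝ) < t := by linarith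
  set K₀ := ⌊t⌋₊ with hK₀
  have hK₀2 : 2 ≤ K₀ := Nat.le_floor (by exact_mod_cast ht)
  have hK₀le : (K₀:ℝ) ≤ t := Nat.floor_le (le_of_lt ht0)
  have hK₀gt : t < (K₀:ℝ)+1 := by exact_mod_cast Nat.lt_floor_add_one t
  have hsum := ((gG_summable t ht0).sum_add_tsum_nat_add K₀).symm
  -- tail bound
  have htail_nonneg : 0 ≤ ∑' k, gG t (k + K₀) :=
    tsum_nonneg (fun k => gG_nonneg t ht0 _)
  have htail : (∑' k, gG t (k + K₀)) ≤ 1/t := by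
    apply tsum_le_of_sum_range_le (fun k => gG_nonneg t ht0 _)
    intro n
    have step : ∀ k ∈ Finset.range n, gG t (k + K₀) ≤
        (fun i : ℕ => 1/((i:ℝ)+(K₀:ℝ)+1)) k - (fun i : ℕ => 1/((i:ℝ)+(K₀:ℝ)+1)) (k+1) := by
      intro k _
      have := gG_le_diff t ht0 (k + K₀)
      push_cast at this ⊢
      convert this using 2 <;> ring
    calc ∑ k ∈ Finset.range n, gG t (k + K₀)
        ≤ ∑ k ∈ Finset.range n,
            ((fun i : ℕ => 1/((i:ℝ)+(K₀:ℝ)+1)) k - (fun i : ℕ => 1/((i:ℝ)+(K₀:ℝ)+1)) (k+1)) :=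
          Finset.sum_le_sum step
      _ = 1/((0:ℝ)+(K₀:ℝ)+1) - 1/((n:ℝ)+(K₀:ℝ)+1) := by
          rw [Finset.sum_range_sub' (fun i : ℕ => 1/((i:ℝ)+(K₀:ℝ)+1)) n]
          norm_num
      _ ≤ 1/t := by
          have h1 : 1/((0:ℝ)+(K₀:ℝ)+1) ≤ 1/t := by
            apply one_div_le_one_div_of_le ht0
            linarith
          have h2 : (0:ℝ) ≤ 1/((n:ℝ)+(K₀:ℝ)+1) := by positivity
          linarith
  -- main part
  set H := ∑ k ∈ Finset.range K₀, 1/((k:ℝ)+2) with hH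
  have hmain_ub : ∑ k ∈ Finset.range K₀, gG t k ≤ H / t := by
    rw [hH, Finset.sum_div]
    apply Finset.sum_le_sum
    intro k _
    calc gG t k ≤ 1/(((k:ℝ)+2)*t) := gG_le t ht k
      _ = 1/((k:ℝ)+2)/t := (div_div 1 _ _).symm
  have hmain_lb : H / t - (K₀:ℝ)/t^2 ≤ ∑ k ∈ Finset.range K₀, gG t k := by
    have : ∑ k ∈ Finset.range K₀, (1/(((k:ℝ)+2)*t) - 1/t^2)
        ≤ ∑ k ∈ Finset.range K₀, gG t k :=
      Finset.sum_le_sum (fun k _ => le_gG t ht k)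
    calc H / t - (K₀:ℝ)/t^2
        = ∑ k ∈ Finset.range K₀, (1/(((k:ℝ)+2)*t) - 1/t^2) := by
          rw [Finset.sum_sub_distrib, Finset.sum_const, Finset.card_range, hH, Finset.sum_div]
          congr 1
          · apply Finset.sum_congr rfl
            intro k _
            field_simp
          · rw [nsmul_eq_mul]
            ring
      _ ≤ _ := this
  -- harmonic bounds
  have hHub : H ≤ Real.log t + 1/2 := by
    have h1 : H ≤ Real.log ((K₀:ℝ)+1) := harm_ub K₀
    have h2 : Real.log ((K₀:ℝ)+1) ≤ Real.log (t+1) :=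
      Real.log_le_log (by positivity) (by linarith)
    have h3 : Real.log (t+1) - Real.log t ≤ 1/2 := by
      have := log_diff_le ht0 (show t ≤ t+1 by linarith)
      have h4 : (t+1-t)/t ≤ 1/2 := by
        rw [div_le_div_iff₀ ht0 (by norm_num)]
        linarith
      linarith
    linarith
  have hHlb : Real.log t - Real.log 2 ≤ H := by
    have h1 : Real.log ((K₀:ℝ)+2) - Real.log 2 ≤ H := harm_lb K₀
    have h2 : Real.log t ≤ Real.log ((K₀:ℝ)+2) :=
      Real.log_le_log ht0 (by linarith)
    linarith
  -- combine
  have hS : (∑' k, gG t k) = ∑ k ∈ Finset.range K₀, gG t k + ∑' k, gG t (k + K₀) := hsum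
  have hd1 : (Real.log t - Real.log 2)/t ≤ H/t := (div_le_div_iff_of_pos_right ht0).mpr hHlb
  have hd2 : H/t ≤ (Real.log t + 1/2)/t := (div_le_div_iff_of_pos_right ht0).mpr hHub
  have hK₀t : (K₀:ℝ)/t^2 ≤ 1/t := by
    rw [div_le_div_iff₀ (by positivity) ht0]
    nlinarith
  have hlog2 : Real.log 2 ≤ 1 := by
    have := Real.log_le_sub_one_of_pos (show (0:ℝ) < 2 by norm_num)
    linarith
  have hl2t : Real.log 2 / t ≤ 1/t := (div_le_div_iff_of_pos_right ht0).mpr hlog2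
  have hhalf : (1/2:ℝ)/t ≤ 1/t := (div_le_div_iff_of_pos_right ht0).mpr (by norm_num)
  have h2t : 2/t = 1/t + 1/t := by ring
  rw [abs_le]
  constructor
  · rw [sub_div] at hd1
    linarith [hS, hmain_lb, htail_nonneg]
  · rw [add_div] at hd2
    linarith [hS, hmain_ub, htail]

theorem gauss_measure_tail_asymptotics :
    ∃ C : ℝ, 0 < C ∧ ∀ t : ℝ, 2 ≤ t →
      |(gaussMeasure {x : ℝ | x ∈ Set.Ioo (0:ℝ) 1 ∧
          t ≤ ((pq 1 x * pq 2 x : ℕ) : ℝ)}).toReal - Real.log t / (t * Real.log 2)| ≤ C / t := by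
  refine ⟨3, by norm_num, ?_⟩
  intro t ht
  have ht0 : (0:ℝ) < t := by linarith
  have hlog2 : (0:ℝ) < Real.log 2 := Real.log_pos one_lt_two
  have hmeas : gaussMeasure {x : ℝ | x ∈ Set.Ioo (0:ℝ) 1 ∧
      t ≤ ((pq 1 x * pq 2 x : ℕ) : ℝ)} = ENNReal.ofReal ((∑' k, gG t k) / Real.log 2) := by
    rw [gE_eq t ht, measure_iUnion (gJ_disjoint t) (gJ_measurable t)]
    have h1 : ∀ k, gaussMeasure (gJ t k) = ENNReal.ofReal (gG t k / Real.log 2) := by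
      intro k
      rw [gauss_gJ t ht k, gG]
    rw [tsum_congr h1, ← ENNReal.ofReal_tsum_of_nonneg
      (fun k => by exact div_nonneg (gG_nonneg t ht0 k) (le_of_lt hlog2)) ((gG_summable t ht0).div_const _)]
    congr 1
    exact tsum_div_const
  rw [hmeas, ENNReal.toReal_ofReal (by exact div_nonneg (tsum_nonneg (fun k => gG_nonneg t ht0 k)) (le_of_lt hlog2))]
  have key := tsum_gG_est t ht
  have heq : (∑' k, gG t k) / Real.log 2 - Real.log t / (t * Real.log 2)
      = ((∑' k, gG t k) - Real.log t / t) / Real.log 2 := by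
    field_simp
  rw [heq, abs_div, abs_of_pos hlog2]
  have hl2 : (2:ℝ)/3 ≤ Real.log 2 := by
    have := Real.log_two_gt_d9
    linarith
  rw [div_le_div_iff₀ hlog2 ht0]
  calc |(∑' k, gG t k) - Real.log t / t| * t ≤ (2/t) * t := by
        apply mul_le_mul_of_nonneg_right key (le_of_lt ht0)
    _ = 2 := by field_simp
    _ ≤ 3 * Real.log 2 := by linarith
end

section
/- There exists a constant C > 0 such that for every real t ≥ 1, the Gauss measure of the set {x ∈ (0,1) : a_1(x)·a_2(x) > t and a_2(x)·a_3(x) > t} is at most C/t. -/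
open MeasureTheory Filter Real Set

/-! ### Auxiliary lemmas -/

/-- The fractional linear map `z ↦ [0; j, k + z]`. -/
noncomputable def gfun (j k : ℕ) (z : ℝ) : ℝ :=
  ((k:ℝ) + z) / ((j:ℝ) * ((k:ℝ) + z) + 1)

lemma gaussMap_key {x : ℝ} (hx : 0 < x) :
    0 ≤ gaussMap x ∧ gaussMap x < 1 ∧ 1 / x = (⌊1/x⌋₊ : ℝ) + gaussMap x := by
  have hx0 : x ≠ 0 := ne_of_gt hx
  have h1 : (0:ℝ) ≤ 1 / x := by positivity
  rw [gaussMap, if_neg hx0, natCast_floor_eq_intCast_floor h1]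
  refine ⟨?_, ?_, by ring⟩
  · have := Int.floor_le (1/x); linarith
  · have := Int.lt_floor_add_one (1/x); linarith

lemma gfun_le {j k : ℕ} (hj : 1 ≤ j) (hk : 1 ≤ k) {a b : ℝ} (ha : 0 ≤ a) (hab : a ≤ b) :
    gfun j k a ≤ gfun j k b := by
  have hj' : (1:ℝ) ≤ j := by exact_mod_cast hj
  have hk' : (1:ℝ) ≤ k := by exact_mod_cast hk
  have hb : 0 ≤ b := le_trans ha hab
  rw [gfun, gfun, div_le_div_iff₀ (by nlinarith) (by nlinarith)]
  nlinarith

lemma gfun_lt {j k : ℕ} (hj : 1 ≤ j) (hk : 1 ≤ k) {b : ℝ} (hb : 0 < b) :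
    gfun j k 0 < gfun j k b := by
  have hj' : (1:ℝ) ≤ j := by exact_mod_cast hj
  have hk' : (1:ℝ) ≤ k := by exact_mod_cast hk
  rw [gfun, gfun, div_lt_div_iff₀ (by nlinarith) (by nlinarith)]
  nlinarith

lemma gfun_sub {j k : ℕ} (hj : 1 ≤ j) (hk : 1 ≤ k) {a b : ℝ} (ha : 0 ≤ a) (hab : a ≤ b) :
    gfun j k b - gfun j k a ≤ (b - a) / ((j:ℝ) * k)^2 := by
  have hj' : (1:ℝ) ≤ j := by exact_mod_cast hj
  have hk' : (1:ℝ) ≤ k := by exact_mod_cast hk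
  have hb : 0 ≤ b := le_trans ha hab
  have d1 : (0:ℝ) < (j:ℝ) * ((k:ℝ) + a) + 1 := by nlinarith
  have d2 : (0:ℝ) < (j:ℝ) * ((k:ℝ) + b) + 1 := by nlinarith
  have e : gfun j k b - gfun j k a
      = (b - a) / (((j:ℝ) * ((k:ℝ) + b) + 1) * ((j:ℝ) * ((k:ℝ) + a) + 1)) := by
    rw [gfun, gfun, div_sub_div _ _ (ne_of_gt d2) (ne_of_gt d1)]
    congr 1
    ring
  rw [e, div_le_div_iff₀ (by positivity) (by positivity)]
  have hD : ((j:ℝ) * k)^2 ≤ ((j:ℝ) * ((k:ℝ) + b) + 1) * ((j:ℝ) * ((k:ℝ) + a) + 1) := by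
    have h1 : (0:ℝ) ≤ (j:ℝ) * a := by positivity
    have h2 : (0:ℝ) ≤ (j:ℝ) * b := by positivity
    have h3 : (0:ℝ) ≤ (j:ℝ) * (k:ℝ) := by positivity
    nlinarith [mul_nonneg h3 h1, mul_nonneg h2 h3, mul_nonneg h2 h1]
  nlinarith [mul_nonneg (sub_nonneg.2 hab) (sub_nonneg.2 hD)]

/-- Tail sum bound `∑_{j ≥ m} 1/j² ≤ 2/m`. -/
lemma tail_sq_sum (m : ℕ) (hm : 1 ≤ m) :
    (∑' j : ℕ, ENNReal.ofReal (if m ≤ j then ((j:ℝ)^2)⁻¹ else 0))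
      ≤ ENNReal.ofReal (2 / m) := by
  set f : ℕ → ℝ := fun j => if m ≤ j then ((j:ℝ)^2)⁻¹ else 0 with hf
  have hnn : ∀ j, 0 ≤ f j := by
    intro j; simp only [hf]; split <;> positivity
  have hsum : Summable f := by
    refine Summable.of_nonneg_of_le hnn (fun j => ?_)
      ((Real.summable_one_div_nat_pow (p := 2)).2 (by norm_num))
    simp only [hf]
    split <;> simp [one_div] <;> positivity
  have hbound : ∀ F : Finset ℕ, ∑ j ∈ F, f j ≤ 2 / m := by
    intro F
    have h1 : ∑ j ∈ F, f j = ∑ j ∈ F.filter (fun j => m ≤ j), ((j:ℝ)^2)⁻¹ := by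
      rw [Finset.sum_filter]
    have hsub : F.filter (fun j => m ≤ j) ⊆ Finset.Ioo (m-1) (F.sup id + 1) := by
      intro j hj
      rw [Finset.mem_filter] at hj
      rw [Finset.mem_Ioo]
      constructor
      · omega
      · have := Finset.le_sup (f := id) hj.1
        simp only [id] at this
        omega
    have h2 : ∑ j ∈ F.filter (fun j => m ≤ j), ((j:ℝ)^2)⁻¹
        ≤ ∑ j ∈ Finset.Ioo (m-1) (F.sup id + 1), ((j:ℝ)^2)⁻¹ :=
      Finset.sum_le_sum_of_subset_of_nonneg hsub (by intros; positivity)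
    have h3 : ∑ j ∈ Finset.Ioo (m-1) (F.sup id + 1), ((j:ℝ)^2)⁻¹ ≤ 2 / (((m-1:ℕ):ℝ) + 1) :=
      sum_Ioo_inv_sq_le _ _
    have h4 : ((m-1:ℕ):ℝ) + 1 = (m:ℝ) := by
      have : ((m-1) + 1 : ℕ) = m := by omega
      exact_mod_cast congrArg (fun n : ℕ => (n:ℝ)) this
    rw [h1, ← h4]
    exact le_trans h2 h3
  rw [← ENNReal.ofReal_tsum_of_nonneg hnn hsum]
  exact ENNReal.ofReal_le_ofReal (hsum.tsum_le_of_sum_le hbound)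

/-- The Gauss measure is dominated by `(1/log 2)` times Lebesgue measure. -/
lemma gaussMeasure_le (s : Set ℝ) (hs : MeasurableSet s) :
    gaussMeasure s ≤ ENNReal.ofReal (1 / Real.log 2) * volume s := by
  have hlog : (0:ℝ) < Real.log 2 := Real.log_pos one_lt_two
  rw [gaussMeasure, withDensity_apply _ hs]
  have hae : ∀ᵐ x ∂((volume.restrict (Set.Ioo (0:ℝ) 1)).restrict s),
      x ∈ Set.Ioo (0:ℝ) 1 := by
    have h1 : ∀ᵐ x ∂(volume.restrict (Set.Ioo (0:ℝ) 1)), x ∈ Set.Ioo (0:ℝ) 1 :=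
      ae_restrict_mem measurableSet_Ioo
    exact h1.filter_mono
      ((Measure.absolutelyContinuous_of_le Measure.restrict_le_self).ae_le)
  calc ∫⁻ x in s, ENNReal.ofReal (1 / (Real.log 2 * (1 + x)))
          ∂(volume.restrict (Set.Ioo (0:ℝ) 1))
      ≤ ∫⁻ _ in s, ENNReal.ofReal (1 / Real.log 2)
          ∂(volume.restrict (Set.Ioo (0:ℝ) 1)) := by
        refine lintegral_mono_ae (hae.mono fun x hx => ?_)
        refine ENNReal.ofReal_le_ofReal ?_
        have hx0 : (0:ℝ) < x := hx.1
        rw [div_le_div_iff₀ (by nlinarith) hlog]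
        nlinarith
    _ = ENNReal.ofReal (1 / Real.log 2) * (volume.restrict (Set.Ioo (0:ℝ) 1)) s := by
        rw [setLIntegral_const]
    _ ≤ ENNReal.ofReal (1 / Real.log 2) * volume s :=
        mul_le_mul_right (Measure.restrict_apply_le _ _) _

/-- Pointwise containment in a cylinder-type interval. -/
lemma pointwise_mem {t x : ℝ} (ht : 1 ≤ t) (hx : x ∈ Set.Ioo (0:ℝ) 1)
    (h12 : t < ((pq 1 x * pq 2 x : ℕ) : ℝ)) (h23 : t < ((pq 2 x * pq 3 x : ℕ) : ℝ)) :
    1 ≤ pq 2 x ∧ 1 ≤ pq 1 x ∧ t < (pq 2 x : ℝ) * (pq 1 x : ℝ) ∧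
      x ∈ Set.Ioc (gfun (pq 1 x) (pq 2 x) 0)
        (gfun (pq 1 x) (pq 2 x) (min 1 ((pq 2 x : ℝ)/t))) := by
  obtain ⟨hx0, hx1⟩ := hx
  have ht0 : (0:ℝ) < t := by linarith
  set j := pq 1 x with hj_def
  set k := pq 2 x with hk_def
  set l := pq 3 x with hl_def
  have e1 : j = ⌊1/x⌋₊ := by rw [hj_def]; simp [pq]
  have e2 : k = ⌊1/(gaussMap x)⌋₊ := by rw [hk_def]; simp [pq]
  have e3 : l = ⌊1/(gaussMap (gaussMap x))⌋₊ := by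
    rw [hl_def]
    have h2 : gaussMap^[3-1] x = gaussMap (gaussMap x) := by
      rw [show (3-1 : ℕ) = 2 from rfl, Function.iterate_succ_apply', Function.iterate_one]
    rw [pq, h2]
  have hj : 1 ≤ j := by
    by_contra h
    have hj0 : j = 0 := by omega
    rw [hj0, zero_mul, Nat.cast_zero] at h12
    linarith
  have hk : 1 ≤ k := by
    by_contra h
    have hk0 : k = 0 := by omega
    rw [hk0, mul_zero, Nat.cast_zero] at h12
    linarith
  have hl : 1 ≤ l := by
    by_contra h
    have hl0 : l = 0 := by omega
    rw [hl0, mul_zero, Nat.cast_zero] at h23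
    linarith
  obtain ⟨hy0, hy1, key1⟩ := gaussMap_key hx0
  set y := gaussMap x with hy_def
  have hyne : y ≠ 0 := by
    intro h
    have : k = 0 := by rw [e2, h]; simp
    omega
  have hyp : 0 < y := lt_of_le_of_ne hy0 (Ne.symm hyne)
  obtain ⟨hz0, hz1, key2⟩ := gaussMap_key hyp
  set z := gaussMap y with hz_def
  have hzne : z ≠ 0 := by
    intro h
    have : l = 0 := by rw [e3, h]; simp
    omega
  have hzp : 0 < z := lt_of_le_of_ne hz0 (Ne.symm hzne)
  -- key identities
  have ej : ((j:ℕ):ℝ) = ((⌊1/x⌋₊ : ℕ) : ℝ) := by exact_mod_cast e1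
  have key1' : x * ((j:ℝ) + y) = 1 := by
    rw [ej, ← key1]
    field_simp
  have ek : ((k:ℕ):ℝ) = ((⌊1/y⌋₊ : ℕ) : ℝ) := by exact_mod_cast e2
  have key2' : y * ((k:ℝ) + z) = 1 := by
    rw [ek, ← key2]
    field_simp
  -- z < k/t
  have hlz : (l:ℝ) ≤ 1/z := by
    rw [show ((l:ℕ):ℝ) = ((⌊1/z⌋₊ : ℕ):ℝ) from by exact_mod_cast e3]
    exact Nat.floor_le (by positivity)
  have h23' : t < (k:ℝ) * (l:ℝ) := by push_cast at h23; exact h23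
  have hk0 : (0:ℝ) < (k:ℝ) := by exact_mod_cast hk
  have hzk : z < (k:ℝ)/t := by
    rw [lt_div_iff₀ ht0]
    have h1 : t * z < (k:ℝ) := by
      have h2 : t < (k:ℝ) * (1/z) :=
        lt_of_lt_of_le h23' (mul_le_mul_of_nonneg_left hlz hk0.le)
      have h3 : (k:ℝ) * (1/z) * z = (k:ℝ) := by field_simp
      have h4 := mul_lt_mul_of_pos_right h2 hzp
      rw [h3] at h4
      exact h4
    linarith
  -- x = gfun j k z
  have hkz : (0:ℝ) < (k:ℝ) + z := by linarith
  have hden : (0:ℝ) < (j:ℝ) * ((k:ℝ) + z) + 1 := by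
    have : (1:ℝ) ≤ (j:ℝ) := by exact_mod_cast hj
    nlinarith
  have hxg : x = gfun j k z := by
    rw [gfun, eq_div_iff (ne_of_gt hden)]
    linear_combination ((k:ℝ) + z) * key1' - x * key2'
  refine ⟨hk, hj, by push_cast at h12; nlinarith, ?_, ?_⟩
  · rw [hxg]; exact gfun_lt hj hk hzp
  · rw [hxg]
    exact gfun_le hj hk (le_of_lt hzp) (le_min (le_of_lt hz1) (le_of_lt hzk))

/-- The cylinder intervals. -/
noncomputable def Bset (t : ℝ) (p : ℕ × ℕ) : Set ℝ :=
  if 1 ≤ p.1 ∧ 1 ≤ p.2 ∧ t < (p.1:ℝ) * (p.2:ℝ) then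
    Set.Ioc (gfun p.2 p.1 0) (gfun p.2 p.1 (min 1 ((p.1:ℝ)/t))) else ∅

lemma Bset_eq (t : ℝ) (k j : ℕ) : Bset t (k, j) =
    if 1 ≤ k ∧ 1 ≤ j ∧ t < (k:ℝ) * (j:ℝ) then
      Set.Ioc (gfun j k 0) (gfun j k (min 1 ((k:ℝ)/t))) else ∅ := rfl

/-- The series bound: sum of interval lengths is at most `8/t`. -/
lemma tsum_len_le {t : ℝ} (ht : 1 ≤ t) :
    (∑' p : ℕ × ℕ, ENNReal.ofReal (if 1 ≤ p.1 ∧ 1 ≤ p.2 ∧ t < (p.1:ℝ) * (p.2:ℝ)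
        then (min 1 ((p.1:ℝ)/t)) / ((p.2:ℝ) * (p.1:ℝ))^2 else 0))
      ≤ ENNReal.ofReal (8 / t) := by
  have ht0 : (0:ℝ) < t := by linarith
  rw [ENNReal.tsum_prod']
  -- the inner sum over j, for fixed k
  have inner : ∀ k : ℕ,
      (∑' j : ℕ, ENNReal.ofReal (if 1 ≤ k ∧ 1 ≤ j ∧ t < (k:ℝ) * (j:ℝ)
        then (min 1 ((k:ℝ)/t)) / ((j:ℝ) * (k:ℝ))^2 else 0))
      ≤ ENNReal.ofReal (2 * (min 1 ((k:ℝ)/t))^2 / (k:ℝ)^2) := by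
    intro k
    rcases Nat.eq_zero_or_pos k with hk0 | hk
    · simp [hk0]
    · have hkR : (1:ℝ) ≤ (k:ℝ) := by exact_mod_cast hk
      set wk : ℝ := min 1 ((k:ℝ)/t) with hwk_def
      have hwk0 : 0 ≤ wk := le_min (by norm_num) (by positivity)
      set m : ℕ := ⌊t/(k:ℝ)⌋₊ + 1 with hm_def
      have hm1 : 1 ≤ m := Nat.le_add_left 1 _
      have hmt : t/(k:ℝ) < (m:ℝ) := by
        have := Nat.lt_floor_add_one (t/(k:ℝ))
        rw [hm_def]
        push_cast
        exact this
      have hguard : ∀ j : ℕ, (1 ≤ k ∧ 1 ≤ j ∧ t < (k:ℝ) * (j:ℝ)) ↔ m ≤ j := by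
        intro j
        constructor
        · rintro ⟨-, -, h⟩
          have : t/(k:ℝ) < (j:ℝ) := by
            rw [div_lt_iff₀ (by linarith)]
            nlinarith
          have h2 : ⌊t/(k:ℝ)⌋₊ < j := (Nat.floor_lt (by positivity)).2 this
          omega
        · intro hmj
          refine ⟨hk, by omega, ?_⟩
          have hjm : (m:ℝ) ≤ (j:ℝ) := by exact_mod_cast hmj
          have : t/(k:ℝ) < (j:ℝ) := lt_of_lt_of_le hmt hjm
          rw [div_lt_iff₀ (by linarith)] at this
          nlinarith
      have hterm : ∀ j : ℕ, (if 1 ≤ k ∧ 1 ≤ j ∧ t < (k:ℝ) * (j:ℝ)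
          then wk / ((j:ℝ) * (k:ℝ))^2 else 0)
          = (wk / (k:ℝ)^2) * (if m ≤ j then ((j:ℝ)^2)⁻¹ else 0) := by
        intro j
        by_cases hmj : m ≤ j
        · rw [if_pos ((hguard j).2 hmj), if_pos hmj]
          rw [mul_pow, div_eq_mul_inv, mul_inv, div_eq_mul_inv]
          ring
        · rw [if_neg (fun h => hmj ((hguard j).1 h)), if_neg hmj, mul_zero]
      calc (∑' j : ℕ, ENNReal.ofReal (if 1 ≤ k ∧ 1 ≤ j ∧ t < (k:ℝ) * (j:ℝ)
              then wk / ((j:ℝ) * (k:ℝ))^2 else 0))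
          = ∑' j : ℕ, ENNReal.ofReal (wk / (k:ℝ)^2) *
              ENNReal.ofReal (if m ≤ j then ((j:ℝ)^2)⁻¹ else 0) := by
            refine tsum_congr fun j => ?_
            rw [hterm j, ENNReal.ofReal_mul (by positivity)]
        _ = ENNReal.ofReal (wk / (k:ℝ)^2) *
              ∑' j : ℕ, ENNReal.ofReal (if m ≤ j then ((j:ℝ)^2)⁻¹ else 0) :=
            ENNReal.tsum_mul_left
        _ ≤ ENNReal.ofReal (wk / (k:ℝ)^2) * ENNReal.ofReal (2 / m) :=
            mul_le_mul_right (tail_sq_sum m hm1) _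
        _ = ENNReal.ofReal (wk / (k:ℝ)^2 * (2 / m)) :=
            (ENNReal.ofReal_mul (by positivity)).symm
        _ ≤ ENNReal.ofReal (2 * wk^2 / (k:ℝ)^2) := by
            refine ENNReal.ofReal_le_ofReal ?_
            have hmR : (1:ℝ) ≤ (m:ℝ) := by exact_mod_cast hm1
            have h1m : 1/(m:ℝ) ≤ wk := by
              refine le_min ?_ ?_
              · rw [div_le_one (by linarith)]; exact hmR
              · have htk : (0:ℝ) < t/(k:ℝ) := by positivity
                rw [div_le_div_iff₀ (by linarith) ht0]
                have := (div_lt_iff₀ (by linarith : (0:ℝ) < (k:ℝ))).1 hmt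
                nlinarith
            have e1 : wk / (k:ℝ)^2 * (2 / (m:ℝ)) = (2 * wk / (k:ℝ)^2) * (1/(m:ℝ)) := by
              ring
            have e2 : 2 * wk^2 / (k:ℝ)^2 = (2 * wk / (k:ℝ)^2) * wk := by ring
            rw [e1, e2]
            exact mul_le_mul_of_nonneg_left h1m (by positivity)
  refine le_trans (ENNReal.tsum_le_tsum inner) ?_
  -- now the outer sum over k
  set N : ℕ := ⌊t⌋₊ with hN_def
  have hN1 : 1 ≤ N := Nat.le_floor (by exact_mod_cast ht)
  have hNt : (N:ℝ) ≤ t := Nat.floor_le (le_of_lt ht0)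
  have htN : t < (N:ℝ) + 1 := Nat.lt_floor_add_one t
  set h1 : ℕ → ENNReal := fun k => if k ≤ N then ENNReal.ofReal (2/t^2) else 0 with hh1
  set h2 : ℕ → ENNReal := fun k =>
    ENNReal.ofReal (2) * ENNReal.ofReal (if N + 1 ≤ k then ((k:ℝ)^2)⁻¹ else 0) with hh2
  have hsplit : ∀ k : ℕ,
      ENNReal.ofReal (2 * (min 1 ((k:ℝ)/t))^2 / (k:ℝ)^2) ≤ h1 k + h2 k := by
    intro k
    by_cases hkN : k ≤ N
    · refine le_trans ?_ le_self_add
      rw [hh1]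
      simp only [if_pos hkN]
      refine ENNReal.ofReal_le_ofReal ?_
      rcases Nat.eq_zero_or_pos k with hk0 | hk
      · simp [hk0]; positivity
      · have hkR : (1:ℝ) ≤ (k:ℝ) := by exact_mod_cast hk
        have hmin : min 1 ((k:ℝ)/t) ≤ (k:ℝ)/t := min_le_right _ _
        have hmin0 : 0 ≤ min 1 ((k:ℝ)/t) := le_min (by norm_num) (by positivity)
        rw [div_le_div_iff₀ (by positivity) (by positivity)]
        have hq1 : min 1 ((k:ℝ)/t) * t ≤ (k:ℝ) := by
          rw [← le_div_iff₀ ht0]; exact hmin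
        nlinarith [mul_le_mul hq1 hq1 (by positivity) (by positivity),
          mul_nonneg hmin0 ht0.le]
    · refine le_trans ?_ le_add_self
      rw [hh2]
      push_neg at hkN
      have hkN' : N + 1 ≤ k := hkN
      simp only [if_pos hkN']
      rw [← ENNReal.ofReal_mul (by norm_num)]
      refine ENNReal.ofReal_le_ofReal ?_
      have hkR : (1:ℝ) ≤ (k:ℝ) := by
        have : 1 ≤ k := by omega
        exact_mod_cast this
      have hmin : min 1 ((k:ℝ)/t) ≤ 1 := min_le_left _ _
      have hmin0 : 0 ≤ min 1 ((k:ℝ)/t) := le_min (by norm_num) (by positivity)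
      rw [div_le_iff₀ (by positivity)]
      have : min 1 ((k:ℝ)/t)^2 ≤ 1 := by nlinarith
      have hk2 : ((k:ℝ)^2)⁻¹ * (k:ℝ)^2 = 1 := by
        field_simp
      nlinarith
  refine le_trans (ENNReal.tsum_le_tsum hsplit) ?_
  rw [ENNReal.tsum_add]
  have hsum1 : (∑' k, h1 k) ≤ ENNReal.ofReal (4/t) := by
    have he : (∑' k, h1 k) = ∑ k ∈ Finset.range (N+1), h1 k := by
      refine tsum_eq_sum fun k hk => ?_
      rw [Finset.mem_range] at hk
      simp only [hh1]
      rw [if_neg (by omega)]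
    rw [he]
    have : ∀ k ∈ Finset.range (N+1), h1 k = ENNReal.ofReal (2/t^2) := by
      intro k hk
      rw [Finset.mem_range] at hk
      simp only [hh1]
      rw [if_pos (by omega)]
    rw [Finset.sum_congr rfl this, Finset.sum_const, Finset.card_range, nsmul_eq_mul]
    have hcast : ((N+1 : ℕ) : ENNReal) = ENNReal.ofReal ((N+1 : ℕ) : ℝ) :=
      (ENNReal.ofReal_natCast _).symm
    rw [hcast, ← ENNReal.ofReal_mul (by positivity)]
    refine ENNReal.ofReal_le_ofReal ?_
    have : ((N+1:ℕ):ℝ) = (N:ℝ) + 1 := by push_cast; ring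
    rw [this, show ((N:ℝ)+1)*(2/t^2) = (2*((N:ℝ)+1))/t^2 from by ring,
      div_le_div_iff₀ (by positivity) ht0]
    nlinarith
  have hsum2 : (∑' k, h2 k) ≤ ENNReal.ofReal (4/t) := by
    rw [hh2]
    rw [ENNReal.tsum_mul_left]
    refine le_trans (mul_le_mul_right (tail_sq_sum (N+1) (by omega)) _) ?_
    rw [← ENNReal.ofReal_mul (by norm_num)]
    refine ENNReal.ofReal_le_ofReal ?_
    have hcast : ((N+1:ℕ):ℝ) = (N:ℝ) + 1 := by push_cast; ring
    rw [hcast, show (2:ℝ) * (2/((N:ℝ)+1)) = 4/((N:ℝ)+1) from by ring,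
      div_le_div_iff₀ (by positivity) ht0]
    linarith
  calc (∑' k, h1 k) + (∑' k, h2 k)
      ≤ ENNReal.ofReal (4/t) + ENNReal.ofReal (4/t) := add_le_add hsum1 hsum2
    _ = ENNReal.ofReal (8/t) := by
        rw [← ENNReal.ofReal_add (by positivity) (by positivity)]
        norm_num
        ring_nf

theorem gauss_measure_two_consecutive_large :
    ∃ C : ℝ, 0 < C ∧ ∀ t : ℝ, 1 ≤ t →
      gaussMeasure {x : ℝ | x ∈ Set.Ioo (0:ℝ) 1 ∧
          t < ((pq 1 x * pq 2 x : ℕ) : ℝ) ∧ t < ((pq 2 x * pq 3 x : ℕ) : ℝ)} ≤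
        ENNReal.ofReal (C / t) := by
  have hlog : (0:ℝ) < Real.log 2 := Real.log_pos one_lt_two
  refine ⟨8 / Real.log 2, by positivity, ?_⟩
  intro t ht
  have ht0 : (0:ℝ) < t := by linarith
  -- containment
  have hsub : {x : ℝ | x ∈ Set.Ioo (0:ℝ) 1 ∧
      t < ((pq 1 x * pq 2 x : ℕ) : ℝ) ∧ t < ((pq 2 x * pq 3 x : ℕ) : ℝ)} ⊆
      ⋃ p, Bset t p := by
    rintro x ⟨hx, h12, h23⟩
    obtain ⟨hk, hj, hprod, hmem⟩ := pointwise_mem ht hx h12 h23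
    refine Set.mem_iUnion.2 ⟨(pq 2 x, pq 1 x), ?_⟩
    rw [Bset_eq, if_pos ⟨hk, hj, hprod⟩]
    exact hmem
  -- volume bound for each Bset t p
  have hvol : ∀ p : ℕ × ℕ, volume (Bset t p) ≤
      ENNReal.ofReal (if 1 ≤ p.1 ∧ 1 ≤ p.2 ∧ t < (p.1:ℝ) * (p.2:ℝ)
        then (min 1 ((p.1:ℝ)/t)) / ((p.2:ℝ) * (p.1:ℝ))^2 else 0) := by
    rintro ⟨k, j⟩
    rw [Bset_eq]
    by_cases hg : 1 ≤ k ∧ 1 ≤ j ∧ t < (k:ℝ) * (j:ℝ)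
    · rw [if_pos hg, if_pos hg, Real.volume_Ioc]
      refine ENNReal.ofReal_le_ofReal ?_
      have hw0 : (0:ℝ) ≤ min 1 ((k:ℝ)/t) := le_min (by norm_num) (by positivity)
      have := gfun_sub hg.2.1 hg.1 (le_refl (0:ℝ)) hw0
      rw [sub_zero] at this
      linarith
    · rw [if_neg hg, if_neg hg]
      simp
  -- measurability of each Bset t p
  have hmeas : ∀ p : ℕ × ℕ, MeasurableSet (Bset t p) := by
    rintro ⟨k, j⟩
    rw [Bset_eq]
    by_cases hg : 1 ≤ k ∧ 1 ≤ j ∧ t < (k:ℝ) * (j:ℝ)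
    · rw [if_pos hg]; exact measurableSet_Ioc
    · rw [if_neg hg]; exact MeasurableSet.empty
  calc gaussMeasure {x : ℝ | x ∈ Set.Ioo (0:ℝ) 1 ∧
          t < ((pq 1 x * pq 2 x : ℕ) : ℝ) ∧ t < ((pq 2 x * pq 3 x : ℕ) : ℝ)}
      ≤ gaussMeasure (⋃ p, Bset t p) := measure_mono hsub
    _ ≤ ∑' p : ℕ × ℕ, gaussMeasure (Bset t p) := measure_iUnion_le _
    _ ≤ ∑' p : ℕ × ℕ, ENNReal.ofReal (1 / Real.log 2) *
          ENNReal.ofReal (if 1 ≤ p.1 ∧ 1 ≤ p.2 ∧ t < (p.1:ℝ) * (p.2:ℝ)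
            then (min 1 ((p.1:ℝ)/t)) / ((p.2:ℝ) * (p.1:ℝ))^2 else 0) := by
        refine ENNReal.tsum_le_tsum fun p => ?_
        exact le_trans (gaussMeasure_le _ (hmeas p)) (mul_le_mul_right (hvol p) _)
    _ = ENNReal.ofReal (1 / Real.log 2) *
          ∑' p : ℕ × ℕ, ENNReal.ofReal (if 1 ≤ p.1 ∧ 1 ≤ p.2 ∧ t < (p.1:ℝ) * (p.2:ℝ)
            then (min 1 ((p.1:ℝ)/t)) / ((p.2:ℝ) * (p.1:ℝ))^2 else 0) :=
        ENNReal.tsum_mul_left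
    _ ≤ ENNReal.ofReal (1 / Real.log 2) * ENNReal.ofReal (8 / t) :=
        mul_le_mul_right (tsum_len_le ht) _
    _ = ENNReal.ofReal ((8 / Real.log 2) / t) := by
        rw [← ENNReal.ofReal_mul (by positivity)]
        congr 1
        ring
end

section
/- There exists a constant C > 0 such that for every real T ≥ 2, ∫_0^1 (a_1(x)·a_2(x))^2 · 1_{{a_1(x)a_2(x) ≤ T}} dμ(x) ≤ C · T · log T, where μ is the Gauss measure. (Second moment bound for the truncated product of consecutive partial quotients.) -/
open MeasureTheory Filter Real Set

lemma gaussMap_measurable : Measurable gaussMap := by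
  unfold gaussMap
  apply Measurable.ite (MeasurableSet.singleton 0) measurable_const
  exact (measurable_const.div measurable_id).sub
    (measurable_from_top.comp (measurable_const.div measurable_id).floor)

lemma pq_measurable (n : ℕ) : Measurable fun x => pq n x :=
  Measurable.nat_floor (measurable_const.div (gaussMap_measurable.iterate _))

lemma pointwise_bound (k : ℕ) (hk : 1 ≤ k) (T : ℝ) (hT : 2 ≤ T)
    {x : ℝ} (hx : x ∈ Ioc (1/(k+1):ℝ) (1/k)) :
    (if ((pq 1 x * pq 2 x : ℕ) : ℝ) ≤ T then ((pq 1 x * pq 2 x : ℕ) : ℝ) ^ 2 else 0)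
      ≤ (if 1/(4*T) ≤ 1 - k*x then ((1-k*x)⁻¹)^2 else 0) := by
  have hk0 : (0:ℝ) < k := by exact_mod_cast hk
  have hk1 : (1:ℝ) ≤ k := by exact_mod_cast hk
  have hT0 : (0:ℝ) < T := by linarith
  have hx0 : 0 < x := lt_trans (by positivity) hx.1
  have hxne : x ≠ 0 := ne_of_gt hx0
  have hkx1 : k * x ≤ 1 := by
    have h := hx.2
    rw [le_div_iff₀ hk0] at h; linarith
  have hkx2 : 1 < ((k:ℝ)+1) * x := by
    have h := hx.1
    rw [div_lt_iff₀ (by positivity)] at h; linarith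
  have h1x_lb : (k:ℝ) ≤ 1/x := by rw [le_div_iff₀ hx0]; linarith
  have h1x_ub : 1/x < (k:ℝ)+1 := by rw [div_lt_iff₀ hx0]; linarith
  have hpq1 : pq 1 x = k := by
    have : gaussMap^[1-1] x = x := rfl
    rw [pq, this, Nat.floor_eq_iff (by positivity)]
    exact ⟨h1x_lb, by push_cast; linarith⟩
  have hgm : gaussMap x = 1/x - k := by
    rw [gaussMap, if_neg hxne]
    have : ⌊1/x⌋ = (k:ℤ) := by
      rw [Int.floor_eq_iff]
      constructor
      · exact_mod_cast h1x_lb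
      · push_cast; linarith
    rw [this]; norm_num
  have hgm' : gaussMap x = (1 - k*x)/x := by
    rw [hgm]; field_simp
  have hpq2 : pq 2 x = ⌊1/(gaussMap x)⌋₊ := by
    rw [pq]; norm_num
  set s : ℝ := 1 - k*x with hs
  have hs0 : 0 ≤ s := by simp [hs]; linarith
  rcases eq_or_lt_of_le hs0 with hse | hsp
  · have hgm0 : gaussMap x = 0 := by rw [hgm', ← hse]; simp
    have : pq 2 x = 0 := by rw [hpq2, hgm0]; simp
    rw [this]
    simp only [Nat.mul_zero, Nat.cast_zero]
    rw [if_pos (by linarith : (0:ℝ) ≤ T)]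
    norm_num
    split <;> positivity
  · have hsx : s < x := by
      have : (k:ℝ) * x > k / (k+1) := by
        rw [gt_iff_lt, div_lt_iff₀ (by positivity)]
        nlinarith [hx.1, hkx2]
      have hx1 : 1/((k:ℝ)+1) < x := hx.1
      have : s < 1/((k:ℝ)+1) := by
        rw [hs, lt_div_iff₀ (by positivity)]
        nlinarith
      linarith
    have hgmpos : 0 < gaussMap x := by rw [hgm']; positivity
    have hinv : 1 / gaussMap x = x / s := by
      rw [hgm']; field_simp
    set m : ℕ := pq 2 x with hm
    have hmval' : m = ⌊x/s⌋₊ := by rw [hpq2, hinv]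
    have hmval : (m:ℝ) = (⌊x/s⌋₊ : ℝ) := by rw [hmval']
    have hxs1 : 1 < x/s := by rw [lt_div_iff₀ hsp]; linarith
    have hm1 : 1 ≤ (m:ℝ) := by
      rw [hmval]
      exact_mod_cast Nat.le_floor (by exact_mod_cast hxs1.le)
    have hmub : (m:ℝ) ≤ x/s := by
      rw [hmval]; exact Nat.floor_le (by positivity)
    have hmlb : x/s < (m:ℝ) + 1 := by
      rw [hmval]; exact Nat.lt_floor_add_one _
    have key1 : (k:ℝ) * m ≤ 1/s := by
      have : (k:ℝ) * m ≤ k * (x/s) := by nlinarith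
      calc (k:ℝ)*m ≤ k*(x/s) := this
        _ = (k*x)/s := by ring
        _ ≤ 1/s := by gcongr
    have key2 : 1/(4*s) ≤ (k:ℝ) * m := by
      have h2m : x ≤ s*(2*m) := by
        have h2m' : x/s ≤ 2*m := by linarith
        rw [div_le_iff₀ hsp] at h2m'; linarith
      have hkx_lb : 1/2 ≤ (k:ℝ)*x := by
        have h' : (k:ℝ)*1 < k*((k+1)*x) := by
          exact mul_lt_mul_of_pos_left hkx2 hk0
        nlinarith [h', hk1]
      rw [div_le_iff₀ (by positivity)]
      calc (1:ℝ) ≤ 2*((k:ℝ)*x) := by linarith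
        _ ≤ 2*((k:ℝ)*(s*(2*m))) := by gcongr
        _ = (k:ℝ)*m*(4*s) := by ring
    have hcast : ((pq 1 x * pq 2 x : ℕ) : ℝ) = (k:ℝ) * m := by
      push_cast [hpq1, ← hm]; ring
    rw [hcast]
    split
    · next h =>
      have hsT : 1/(4*T) ≤ s := by
        have h1 : 1/(4*s) ≤ T := le_trans key2 h
        rw [div_le_iff₀ (by positivity)] at h1
        rw [div_le_iff₀ (by positivity)]
        linarith [show (4:ℝ)*s*T = s*(4*T) from by ring]
      rw [if_pos hsT]
      have hle : (k:ℝ)*m ≤ s⁻¹ := by rwa [← one_div]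
      have h0 : (0:ℝ) ≤ (k:ℝ)*m := by positivity
      exact pow_le_pow_left₀ h0 hle 2
    · split
      · positivity
      · exact le_refl 0

lemma integral_G_bound (k : ℕ) (hk : 1 ≤ k) (T : ℝ) (hT : 2 ≤ T) :
    (∫ x in Ioc (1/(k+1):ℝ) (1/k), (if 1/(4*T) ≤ 1 - k*x then ((1-(k:ℝ)*x)⁻¹)^2 else 0))
      ≤ if (k:ℝ) ≤ 4*T then 4*T/k else 0 := by
  have hk0 : (0:ℝ) < k := by exact_mod_cast hk
  have hT0 : (0:ℝ) < T := by linarith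
  have h4T : (0:ℝ) < 4*T := by linarith
  set a : ℝ := 1/(k+1) with ha
  set c : ℝ := 1/k with hc
  set b' : ℝ := (1-1/(4*T))/k with hb'
  have hind : ∀ x : ℝ, (if 1/(4*T) ≤ 1 - k*x then ((1-(k:ℝ)*x)⁻¹)^2 else 0)
      = (Iic b').indicator (fun x => ((1-(k:ℝ)*x)⁻¹)^2) x := by
    intro x
    rw [Set.indicator_apply]
    congr 1
    simp only [eq_iff_iff, mem_Iic, hb', le_div_iff₀ hk0]
    constructor <;> intro h <;> linarith
  simp_rw [hind]
  rw [setIntegral_indicator measurableSet_Iic, Set.Ioc_inter_Iic]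
  have hb'c : 1 - (k:ℝ)*b' = 1/(4*T) := by
    rw [hb']; field_simp; ring
  by_cases hcase : (k:ℝ) ≤ 4*T
  · rw [if_pos hcase]
    set m : ℝ := min c b' with hm
    by_cases hma : m ≤ a
    · rw [Set.Ioc_eq_empty (not_lt.mpr hma), setIntegral_empty]
      positivity
    · push_neg at hma
      have hmb' : m ≤ b' := min_le_right _ _
      have hmc : m ≤ c := min_le_left _ _
      have hpos : ∀ x ∈ Set.Icc a m, 0 < 1 - (k:ℝ)*x := by
        intro x hx
        have : (k:ℝ)*x ≤ k*b' := by
          have := hx.2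
          nlinarith [hmb']
        have h2 : 1 - (k:ℝ)*b' ≤ 1 - k*x := by linarith
        rw [hb'c] at h2
        have hp : (0:ℝ) < 1/(4*T) := by positivity
        linarith
      have hderiv : ∀ x ∈ Set.uIcc a m,
          HasDerivAt (fun y => ((k:ℝ) * (1-k*y))⁻¹) (((1-(k:ℝ)*x)⁻¹)^2) x := by
        intro x hx
        rw [Set.uIcc_of_le hma.le] at hx
        have hne : (k:ℝ) * (1-k*x) ≠ 0 := by
          have := hpos x hx
          positivity
        have h1 : HasDerivAt (fun y => (k:ℝ) * (1-k*y)) ((k:ℝ) * -((k:ℝ)*1)) x :=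
          (((hasDerivAt_id x).const_mul (k:ℝ)).const_sub 1).const_mul (k:ℝ)
        have h2 := h1.inv hne
        refine h2.congr_deriv ?_
        have h3 := (hpos x hx).ne'
        field_simp
      have hcont : IntervalIntegrable (fun x => ((1-(k:ℝ)*x)⁻¹)^2) volume a m := by
        apply ContinuousOn.intervalIntegrable
        rw [Set.uIcc_of_le hma.le]
        apply ContinuousOn.pow
        apply ContinuousOn.inv₀
        · exact (continuous_const.sub (continuous_const.mul continuous_id)).continuousOn
        · intro x hx; exact (hpos x hx).ne'
      rw [← intervalIntegral.integral_of_le hma.le,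
        intervalIntegral.integral_eq_sub_of_hasDerivAt hderiv hcont]
      have hFa : (0:ℝ) ≤ ((k:ℝ) * (1-k*a))⁻¹ := by
        have : 0 < 1 - (k:ℝ)*a := hpos a ⟨le_refl a, hma.le⟩
        positivity
      have hFm : ((k:ℝ) * (1-k*m))⁻¹ ≤ 4*T/k := by
        have h1 : 1/(4*T) ≤ 1 - (k:ℝ)*m := by
          have : (k:ℝ)*m ≤ k*b' := by nlinarith [hmb']
          rw [← hb'c]; linarith
        have h2 : (k:ℝ) * (1/(4*T)) ≤ k * (1-k*m) := by nlinarith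
        have h3 : 0 < (k:ℝ) * (1/(4*T)) := by positivity
        calc ((k:ℝ) * (1-k*m))⁻¹ ≤ ((k:ℝ) * (1/(4*T)))⁻¹ := by
              exact inv_anti₀ h3 h2
          _ = 4*T/k := by field_simp
      linarith
  · rw [if_neg hcase]
    push_neg at hcase
    have hb'a : b' ≤ a := by
      rw [hb', ha, div_le_div_iff₀ hk0 (by positivity)]
      have h1 : (1:ℝ) ≤ ((k:ℝ)+1)/(4*T) := by
        rw [le_div_iff₀ h4T]; linarith
      have h2 : ((k:ℝ)+1) * (1/(4*T)) = ((k:ℝ)+1)/(4*T) := by ring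
      nlinarith [h1, h2]
    have : min c b' ≤ a := le_trans (min_le_right _ _) hb'a
    rw [Set.Ioc_eq_empty (not_lt.mpr this), setIntegral_empty]

lemma union_Ioc : (⋃ i : ℕ, Ioc (1/((i:ℝ)+1+1)) (1/((i:ℝ)+1))) = Ioc (0:ℝ) 1 := by
  ext x
  simp only [mem_iUnion, mem_Ioc]
  constructor
  · rintro ⟨i, h1, h2⟩
    have hi1 : (0:ℝ) < (i:ℝ)+1+1 := by positivity
    constructor
    · exact lt_trans (by positivity) h1
    · calc x ≤ 1/((i:ℝ)+1) := h2
        _ ≤ 1 := by rw [div_le_one (by positivity)]; linarith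
  · rintro ⟨hx0, hx1⟩
    have h1x : (1:ℝ) ≤ 1/x := by rw [le_div_iff₀ hx0]; linarith
    set k : ℕ := ⌊1/x⌋₊ with hkdef
    have hk1 : 1 ≤ k := Nat.le_floor (by exact_mod_cast h1x)
    have hkle : (k:ℝ) ≤ 1/x := Nat.floor_le (by positivity)
    have hklt : 1/x < (k:ℝ)+1 := Nat.lt_floor_add_one _
    refine ⟨k-1, ?_, ?_⟩
    · have hcast : ((k-1:ℕ):ℝ)+1+1 = (k:ℝ)+1 := by
        have : ((k-1:ℕ):ℝ) = (k:ℝ)-1 := by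
          push_cast [Nat.cast_sub hk1]; ring
        rw [this]; ring
      rw [hcast, div_lt_iff₀ (by positivity)]
      rw [div_lt_iff₀ hx0] at hklt
      linarith
    · have hcast : ((k-1:ℕ):ℝ)+1 = (k:ℝ) := by
        have : ((k-1:ℕ):ℝ) = (k:ℝ)-1 := by
          push_cast [Nat.cast_sub hk1]; ring
        rw [this]; ring
      rw [hcast, le_div_iff₀ (by exact_mod_cast hk1 : (0:ℝ) < (k:ℝ))]
      rw [le_div_iff₀ hx0] at hkle
      linarith

lemma sum_bound (T : ℝ) (hT : 2 ≤ T) :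
    ∑ i ∈ Finset.range ⌊4*T⌋₊, (if ((i:ℝ)+1) ≤ 4*T then 4*T/((i:ℝ)+1) else 0)
      ≤ 4*T*(1 + Real.log (4*T)) := by
  have hT0 : (0:ℝ) < T := by linarith
  have h4T : (0:ℝ) < 4*T := by linarith
  set N := ⌊4*T⌋₊ with hN
  have hN1 : 1 ≤ N := Nat.le_floor (by push_cast; linarith)
  have step1 : ∑ i ∈ Finset.range N, (if ((i:ℝ)+1) ≤ 4*T then 4*T/((i:ℝ)+1) else 0)
      ≤ ∑ i ∈ Finset.range N, 4*T/((i:ℝ)+1) := by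
    apply Finset.sum_le_sum
    intro i _
    split
    · exact le_refl _
    · positivity
  have step2 : ∑ i ∈ Finset.range N, 4*T/((i:ℝ)+1) = 4*T * ((harmonic N : ℚ) : ℝ) := by
    rw [harmonic]
    push_cast
    rw [Finset.mul_sum]
    apply Finset.sum_congr rfl
    intro i _
    rw [div_eq_mul_inv]
  have step3 : ((harmonic N : ℚ) : ℝ) ≤ 1 + Real.log N := harmonic_le_one_add_log N
  have step4 : Real.log N ≤ Real.log (4*T) := by
    apply Real.log_le_log (by exact_mod_cast hN1)
    exact Nat.floor_le (by linarith)
  calc _ ≤ ∑ i ∈ Finset.range N, 4*T/((i:ℝ)+1) := step1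
    _ = 4*T * ((harmonic N : ℚ) : ℝ) := step2
    _ ≤ 4*T*(1 + Real.log (4*T)) := by nlinarith [step3, step4]

lemma final_const (T : ℝ) (hT : 2 ≤ T) :
    (1/Real.log 2) * (4*T*(1 + Real.log (4*T)))
      ≤ (4*((1+Real.log 4)/Real.log 2 + 1)/Real.log 2) * T * Real.log T := by
  have hl2 : (0:ℝ) < Real.log 2 := Real.log_pos one_lt_two
  have hlT : Real.log 2 ≤ Real.log T := Real.log_le_log two_pos hT
  have hl4 : (0:ℝ) < Real.log 4 := Real.log_pos (by norm_num)
  have hT0 : (0:ℝ) < T := by linarith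
  have hsplit : Real.log (4*T) = Real.log 4 + Real.log T := Real.log_mul (by norm_num) (by linarith)
  have h1 : 1 + Real.log (4*T) ≤ ((1+Real.log 4)/Real.log 2 + 1) * Real.log T := by
    rw [hsplit]
    have : 1 + Real.log 4 ≤ ((1+Real.log 4)/Real.log 2) * Real.log T := by
      rw [div_mul_eq_mul_div, le_div_iff₀ hl2]
      nlinarith
    nlinarith [Real.log_pos (by linarith : (1:ℝ) < T)]
  have hlTpos : 0 < Real.log T := by linarith
  have h2 : 4*T*(1 + Real.log (4*T)) ≤ (4*((1+Real.log 4)/Real.log 2 + 1)) * T * Real.log T := by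
    have := mul_le_mul_of_nonneg_left h1 (le_of_lt (by positivity : (0:ℝ) < 4*T))
    nlinarith [this]
  calc (1/Real.log 2) * (4*T*(1 + Real.log (4*T)))
      ≤ (1/Real.log 2) * ((4*((1+Real.log 4)/Real.log 2 + 1)) * T * Real.log T) := by
        apply mul_le_mul_of_nonneg_left h2 (by positivity)
    _ = (4*((1+Real.log 4)/Real.log 2 + 1)/Real.log 2) * T * Real.log T := by
        field_simp

theorem second_moment_truncated :
    ∃ C : ℝ, 0 < C ∧ ∀ T : ℝ, 2 ≤ T →
      (∫ x, (if ((pq 1 x * pq 2 x : ℕ) : ℝ) ≤ T then ((pq 1 x * pq 2 x : ℕ) : ℝ) ^ 2 else 0)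
          ∂gaussMeasure) ≤ C * T * Real.log T := by
  have hl2 : (0:ℝ) < Real.log 2 := Real.log_pos one_lt_two
  have hl4 : (0:ℝ) < Real.log 4 := Real.log_pos (by norm_num)
  refine ⟨4*((1+Real.log 4)/Real.log 2 + 1)/Real.log 2, by positivity, ?_⟩
  intro T hT
  have hT0 : (0:ℝ) < T := by linarith
  have hlT : (0:ℝ) < Real.log T := Real.log_pos (by linarith)
  set C : ℝ := 4*((1+Real.log 4)/Real.log 2 + 1)/Real.log 2 with hC
  set f : ℝ → ℝ := fun x =>
    if ((pq 1 x * pq 2 x : ℕ) : ℝ) ≤ T then ((pq 1 x * pq 2 x : ℕ) : ℝ) ^ 2 else 0 with hf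
  have hprod : Measurable fun x => ((pq 1 x * pq 2 x : ℕ) : ℝ) :=
    measurable_from_top.comp ((pq_measurable 1).mul (pq_measurable 2))
  have hfmeas : Measurable f :=
    Measurable.ite (measurableSet_le hprod measurable_const) (hprod.pow_const 2) measurable_const
  have hfnn : ∀ x, 0 ≤ f x := by
    intro x
    rw [hf]
    dsimp only
    split
    · positivity
    · exact le_refl 0
  have hw : Measurable fun x : ℝ => ENNReal.ofReal (1 / (Real.log 2 * (1 + x))) :=
    ENNReal.measurable_ofReal.comp
      (measurable_const.div (measurable_const.mul (measurable_const.add measurable_id)))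
  set sI : ℕ → Set ℝ := fun i => Ioc (1/((i:ℝ)+1+1)) (1/((i:ℝ)+1)) with hsdef
  set N := ⌊4*T⌋₊ with hN
  set bnd : ℕ → ℝ := fun i => if ((i:ℝ)+1) ≤ 4*T then 4*T/((i:ℝ)+1) else 0 with hbnd
  have hbndnn : ∀ i, 0 ≤ bnd i := by
    intro i
    rw [hbnd]
    dsimp only
    split
    · positivity
    · exact le_refl 0
  have hGle : ∀ i : ℕ, (∫⁻ x in sI i, ENNReal.ofReal (f x)) ≤ ENNReal.ofReal (bnd i) := by
    intro i
    set k : ℕ := i+1 with hkd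
    have hk : 1 ≤ k := Nat.le_add_left 1 i
    have hkcast : ((k:ℕ):ℝ) = (i:ℝ)+1 := by rw [hkd]; push_cast; ring
    have hset : sI i = Ioc (1/((k:ℝ)+1)) (1/(k:ℝ)) := by
      rw [hsdef]; simp only [hkcast]
    set G : ℝ → ℝ := fun x => if 1/(4*T) ≤ 1-(k:ℝ)*x then ((1-(k:ℝ)*x)⁻¹)^2 else 0 with hG
    have hGmeas : Measurable G := by
      apply Measurable.ite _ _ measurable_const
      · exact measurableSet_le measurable_const
          (measurable_const.sub (measurable_const.mul measurable_id))
      · exact ((measurable_const.sub (measurable_const.mul measurable_id)).inv).pow_const 2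
    have hGnn : ∀ x, 0 ≤ G x := by
      intro x
      rw [hG]
      dsimp only
      split
      · positivity
      · exact le_refl 0
    have hGbd : ∀ x, ‖G x‖ ≤ (4*T)^2 := by
      intro x
      rw [Real.norm_of_nonneg (hGnn x), hG]
      dsimp only
      split
      · next h =>
        have h4T : (0:ℝ) < 4*T := by linarith
        have hpos : (0:ℝ) < 1-(k:ℝ)*x := lt_of_lt_of_le (by positivity) h
        have : (1-(k:ℝ)*x)⁻¹ ≤ 4*T := by
          have h2 := inv_anti₀ (by positivity : (0:ℝ) < 1/(4*T)) h
          rwa [one_div, inv_inv] at h2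
        exact pow_le_pow_left₀ (by positivity) this 2
      · positivity
    have hGint : IntegrableOn G (sI i) volume := by
      apply Integrable.mono' (g := fun _ => (4*T)^2)
      · rw [hset]
        exact integrableOn_const measure_Ioc_lt_top.ne
      · exact hGmeas.aestronglyMeasurable
      · exact ae_of_all _ hGbd
    calc (∫⁻ x in sI i, ENNReal.ofReal (f x))
        ≤ ∫⁻ x in sI i, ENNReal.ofReal (G x) := by
          rw [hset]
          apply setLIntegral_mono' measurableSet_Ioc
          intro x hx
          exact ENNReal.ofReal_le_ofReal (pointwise_bound k hk T hT hx)
      _ = ENNReal.ofReal (∫ x in sI i, G x) :=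
          (ofReal_integral_eq_lintegral_ofReal hGint (ae_of_all _ hGnn)).symm
      _ ≤ ENNReal.ofReal (bnd i) := by
          apply ENNReal.ofReal_le_ofReal
          have := integral_G_bound k hk T hT
          rw [hset, hbnd]
          simp only [← hkcast]
          exact this
  have main : (∫⁻ x, ENNReal.ofReal (f x) ∂gaussMeasure)
      ≤ ENNReal.ofReal ((1/Real.log 2) * (4*T*(1+Real.log (4*T)))) := by
    have hg : Measurable fun x => ENNReal.ofReal (f x) := ENNReal.measurable_ofReal.comp hfmeas
    rw [gaussMeasure, lintegral_withDensity_eq_lintegral_mul _ hw hg]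
    simp only [Pi.mul_apply]
    calc (∫⁻ x in Ioo (0:ℝ) 1,
            ENNReal.ofReal (1 / (Real.log 2 * (1 + x))) * ENNReal.ofReal (f x) ∂volume)
        ≤ ∫⁻ x in Ioo (0:ℝ) 1,
            ENNReal.ofReal (1/Real.log 2) * ENNReal.ofReal (f x) ∂volume := by
          apply setLIntegral_mono' measurableSet_Ioo
          intro x hx
          apply mul_le_mul_left
          apply ENNReal.ofReal_le_ofReal
          rw [one_div, one_div]
          apply inv_anti₀ hl2
          nlinarith [hx.1]
      _ = ENNReal.ofReal (1/Real.log 2) * ∫⁻ x in Ioo (0:ℝ) 1, ENNReal.ofReal (f x) ∂volume :=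
          lintegral_const_mul _ (ENNReal.measurable_ofReal.comp hfmeas)
      _ ≤ ENNReal.ofReal (1/Real.log 2) * ∫⁻ x in Ioc (0:ℝ) 1, ENNReal.ofReal (f x) ∂volume := by
          apply mul_le_mul_right
          exact lintegral_mono' (Measure.restrict_mono Ioo_subset_Ioc_self le_rfl) le_rfl
      _ = ENNReal.ofReal (1/Real.log 2) *
            ∫⁻ x in ⋃ i, sI i, ENNReal.ofReal (f x) ∂volume := by
          rw [hsdef, union_Ioc]
      _ ≤ ENNReal.ofReal (1/Real.log 2) * ∑' i, ∫⁻ x in sI i, ENNReal.ofReal (f x) ∂volume :=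
          mul_le_mul_right (lintegral_iUnion_le _ _) _
      _ ≤ ENNReal.ofReal (1/Real.log 2) * ∑' i, ENNReal.ofReal (bnd i) :=
          mul_le_mul_right (ENNReal.tsum_le_tsum hGle) _
      _ = ENNReal.ofReal (1/Real.log 2) * ∑ i ∈ Finset.range N, ENNReal.ofReal (bnd i) := by
          congr 1
          apply tsum_eq_sum
          intro i hi
          have hiN : N ≤ i := by
            by_contra hcon
            exact hi (Finset.mem_range.mpr (not_le.mp hcon))
          have h4lt : 4*T < (i:ℝ)+1 := by
            have h1 : 4*T < (N:ℝ)+1 := Nat.lt_floor_add_one _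
            have h2 : (N:ℝ) ≤ (i:ℝ) := by exact_mod_cast hiN
            linarith
          rw [hbnd]
          dsimp only
          rw [if_neg (not_le.mpr h4lt), ENNReal.ofReal_zero]
      _ = ENNReal.ofReal (1/Real.log 2) * ENNReal.ofReal (∑ i ∈ Finset.range N, bnd i) := by
          rw [ENNReal.ofReal_sum_of_nonneg (fun i _ => hbndnn i)]
      _ ≤ ENNReal.ofReal (1/Real.log 2) * ENNReal.ofReal (4*T*(1+Real.log (4*T))) :=
          mul_le_mul_right (ENNReal.ofReal_le_ofReal (sum_bound T hT)) _
      _ = ENNReal.ofReal ((1/Real.log 2) * (4*T*(1+Real.log (4*T)))) :=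
          (ENNReal.ofReal_mul (by positivity)).symm
  rw [show (∫ x, (if ((pq 1 x * pq 2 x : ℕ) : ℝ) ≤ T then ((pq 1 x * pq 2 x : ℕ) : ℝ) ^ 2 else 0)
      ∂gaussMeasure) = ∫ x, f x ∂gaussMeasure from rfl]
  rw [integral_eq_lintegral_of_nonneg_ae (ae_of_all _ hfnn) hfmeas.aestronglyMeasurable]
  exact ENNReal.toReal_le_of_le_ofReal (by positivity)
    (main.trans (ENNReal.ofReal_le_ofReal (final_const T hT)))
end
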